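/- Under the same hypotheses (symmetric semigroup S(d1,d2,d3) with Hilbert series numerator (1−z^{a22 d2})(1−z^{a33 d3})), the sum of squares of the gaps satisfies 12·g₂ = (s_d − ⟨ã,d⟩)·(s_d·⟨ã,d⟩ − ⟨ã,d⟩² − (d1d2 + d1d3 + d2d3) + d1d2d3), where s_d = d1+d2+d3 and ⟨ã,d⟩ = a22 d2 + a33 d3. -/
import Mathlib

section Helpers
open Polynomial Finset

private noncomputable def Qp (n : ℕ) : ℚ[X] :=
  ∑ k ∈ Finset.range n, Polynomial.C ((n.choose (k+1) : ℚ)) * Polynomial.X^k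

private lemma Qp_coeff (n k : ℕ) : (Qp n).coeff k = (n.choose (k+1) : ℚ) := by
  rw [Qp, finset_sum_coeff]
  simp only [coeff_C_mul, coeff_X_pow, mul_ite, mul_one, mul_zero]
  rw [Finset.sum_ite_eq (Finset.range n) k]
  split_ifs with h
  · rfl
  · rw [Finset.mem_range, not_lt] at h
    rw [Nat.choose_eq_zero_of_lt (by omega), Nat.cast_zero]

private lemma X_mul_Qp (n : ℕ) : Polynomial.X * Qp n = (Polynomial.X + 1)^n - 1 := by
  ext j
  cases j with
  | zero => simp [mul_coeff_zero, coeff_X_add_one_pow]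
  | succ j =>
    rw [Polynomial.coeff_X_mul, Qp_coeff, coeff_sub, coeff_X_add_one_pow,
      Polynomial.coeff_one]
    simp

private lemma cast_ch3 (n : ℕ) : (n.choose 3 : ℚ) = n*(n-1)*(n-2)/6 := by
  induction n with
  | zero => simp
  | succ n ih =>
    rw [Nat.choose_succ_succ' n 2]
    push_cast [ih, Nat.cast_choose_two]
    ring

private lemma cast_ch4 (n : ℕ) : (n.choose 4 : ℚ) = n*(n-1)*(n-2)*(n-3)/24 := by
  induction n with
  | zero => simp
  | succ n ih =>
    rw [Nat.choose_succ_succ' n 3]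
    push_cast [ih, cast_ch3]
    ring

private lemma coeffm1 (p q : ℚ[X]) :
    (p*q).coeff 1 = p.coeff 0 * q.coeff 1 + p.coeff 1 * q.coeff 0 := by
  rw [Polynomial.coeff_mul, Finset.Nat.sum_antidiagonal_eq_sum_range_succ_mk]
  simp [Finset.sum_range_succ]

private lemma coeffm2 (p q : ℚ[X]) :
    (p*q).coeff 2 = p.coeff 0 * q.coeff 2 + p.coeff 1 * q.coeff 1 + p.coeff 2 * q.coeff 0 := by
  rw [Polynomial.coeff_mul, Finset.Nat.sum_antidiagonal_eq_sum_range_succ_mk]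
  simp [Finset.sum_range_succ]

private lemma coeffm3 (p q : ℚ[X]) :
    (p*q).coeff 3 = p.coeff 0 * q.coeff 3 + p.coeff 1 * q.coeff 2
      + p.coeff 2 * q.coeff 1 + p.coeff 3 * q.coeff 0 := by
  rw [Polynomial.coeff_mul, Finset.Nat.sum_antidiagonal_eq_sum_range_succ_mk]
  simp [Finset.sum_range_succ]

private lemma coeffX1 (p : ℚ[X]) : (Polynomial.X * p).coeff 1 = p.coeff 0 := by
  simpa using Polynomial.coeff_X_mul p 0

private lemma coeffX2 (p : ℚ[X]) : (Polynomial.X * p).coeff 2 = p.coeff 1 := by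
  simpa using Polynomial.coeff_X_mul p 1

private lemma coeffX3 (p : ℚ[X]) : (Polynomial.X * p).coeff 3 = p.coeff 2 := by
  simpa using Polynomial.coeff_X_mul p 2

private lemma coeff_X_two : (Polynomial.X : ℚ[X]).coeff 2 = 0 := by
  simp [Polynomial.coeff_X]

private lemma coeff_X_three : (Polynomial.X : ℚ[X]).coeff 3 = 0 := by
  simp [Polynomial.coeff_X]

private lemma one_sub_X_mul_mk_one :
    ((1 : PowerSeries ℚ) - PowerSeries.X) * PowerSeries.mk (fun _ => (1:ℚ)) = 1 := by
  ext n
  cases n with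
  | zero => simp
  | succ n =>
    rw [sub_mul, one_mul, map_sub, PowerSeries.coeff_succ_X_mul, PowerSeries.coeff_mk,
      PowerSeries.coeff_mk, PowerSeries.coeff_one]
    simp

end Helpers

open PowerSeries in
open scoped Classical in
theorem symmetric_semigroup_gap_square_sum (d1 d2 d3 a11 a22 a33 : ℕ)
    (h1 : 1 < d1) (h12 : d1 < d2) (h23 : d2 < d3)
    (hgcd : Nat.gcd d1 (Nat.gcd d2 d3) = 1)
    (ha : a11 * d1 = a22 * d2)
    (hfin : {s : ℕ | ¬ ∃ x1 x2 x3 : ℕ, s = x1 * d1 + x2 * d2 + x3 * d3}.Finite)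
    (hH : (PowerSeries.mk fun s =>
          if ∃ x1 x2 x3 : ℕ, s = x1 * d1 + x2 * d2 + x3 * d3 then (1 : ℚ) else 0) *
        ((1 - X ^ d1) * (1 - X ^ d2) * (1 - X ^ d3)) =
      (1 - X ^ (a22 * d2)) * (1 - X ^ (a33 * d3))) :
    (12 : ℤ) * ∑ s ∈ hfin.toFinset, (s : ℤ) ^ 2 =
      (((d1 : ℤ) + d2 + d3) - ((a22 : ℤ) * d2 + (a33 : ℤ) * d3)) *
        (((d1 : ℤ) + d2 + d3) * ((a22 : ℤ) * d2 + (a33 : ℤ) * d3) -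
            ((a22 : ℤ) * d2 + (a33 : ℤ) * d3) ^ 2 -
          ((d1 : ℤ) * d2 + (d1 : ℤ) * d3 + (d2 : ℤ) * d3) + (d1 : ℤ) * d2 * d3) := by
  set F := hfin.toFinset with hF
  set P : Polynomial ℚ := ∑ s ∈ F, Polynomial.X ^ s with hP
  -- coercion of P
  have hPcoe : (P : PowerSeries ℚ) =
      PowerSeries.mk (fun s => if ∃ x1 x2 x3 : ℕ, s = x1 * d1 + x2 * d2 + x3 * d3 then (0:ℚ) else 1) := by
    ext n
    rw [Polynomial.coeff_coe, PowerSeries.coeff_mk, hP, Polynomial.finset_sum_coeff]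
    simp only [Polynomial.coeff_X_pow]
    rw [Finset.sum_ite_eq (F) n]
    have : n ∈ F ↔ ¬ ∃ x1 x2 x3 : ℕ, n = x1 * d1 + x2 * d2 + x3 * d3 := by
      rw [hF, Set.Finite.mem_toFinset]; rfl
    split_ifs with h h2 h2 <;> simp_all
  have hA : (PowerSeries.mk fun s =>
        if ∃ x1 x2 x3 : ℕ, s = x1 * d1 + x2 * d2 + x3 * d3 then (1 : ℚ) else 0) =
      PowerSeries.mk (fun _ => (1:ℚ)) - (P : PowerSeries ℚ) := by
    rw [hPcoe]
    ext n
    rw [map_sub, PowerSeries.coeff_mk, PowerSeries.coeff_mk, PowerSeries.coeff_mk]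
    split_ifs <;> norm_num
  rw [hA] at hH
  -- power series identity
  have key : ((1 : PowerSeries ℚ) - PowerSeries.X) * (P : PowerSeries ℚ) *
        ((1 - PowerSeries.X ^ d1) * (1 - PowerSeries.X ^ d2) * (1 - PowerSeries.X ^ d3)) =
      ((1 - PowerSeries.X ^ d1) * (1 - PowerSeries.X ^ d2) * (1 - PowerSeries.X ^ d3)) -
        (1 - PowerSeries.X) *
          ((1 - PowerSeries.X ^ (a22 * d2)) * (1 - PowerSeries.X ^ (a33 * d3))) := by
    linear_combination (-(1 - (PowerSeries.X : PowerSeries ℚ))) * hH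
      + ((1 - (PowerSeries.X : PowerSeries ℚ) ^ d1) * (1 - PowerSeries.X ^ d2) *
          (1 - PowerSeries.X ^ d3)) * one_sub_X_mul_mk_one
  -- polynomial identity
  have polyId : ((1 : Polynomial ℚ) - Polynomial.X) * P *
        ((1 - Polynomial.X ^ d1) * (1 - Polynomial.X ^ d2) * (1 - Polynomial.X ^ d3)) =
      ((1 - Polynomial.X ^ d1) * (1 - Polynomial.X ^ d2) * (1 - Polynomial.X ^ d3)) -
        (1 - Polynomial.X) *
          ((1 - Polynomial.X ^ (a22 * d2)) * (1 - Polynomial.X ^ (a33 * d3))) := by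
    rw [← Polynomial.coe_inj]
    push_cast [Polynomial.coe_sub, Polynomial.coe_mul, Polynomial.coe_one,
      Polynomial.coe_pow, Polynomial.coe_X]
    exact key
  have tId := congrArg (fun p : Polynomial ℚ => p.comp (Polynomial.X + 1)) polyId
  simp only [Polynomial.mul_comp, Polynomial.sub_comp, Polynomial.one_comp,
    Polynomial.X_comp, Polynomial.pow_comp] at tId
  have hQ : ∀ n : ℕ, (1:Polynomial ℚ) - (Polynomial.X + 1)^n = -(Polynomial.X * Qp n) := by
    intro n; rw [X_mul_Qp]; ring
  rw [hQ d1, hQ d2, hQ d3, hQ (a22*d2), hQ (a33*d3)] at tId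
  set Pc : Polynomial ℚ := P.comp (Polynomial.X + 1) with hPcDef
  have tId2 : (Polynomial.X : Polynomial ℚ)^3 *
        (Polynomial.X * (Pc * (Qp d1 * Qp d2 * Qp d3))) =
      Polynomial.X^3 * (Qp (a22*d2) * Qp (a33*d3) - Qp d1 * Qp d2 * Qp d3) := by
    linear_combination tId
  have main := mul_left_cancel₀ (pow_ne_zero 3 (Polynomial.X_ne_zero (R := ℚ))) tId2
  -- coefficients of Pc
  have hPcco : ∀ k : ℕ, Pc.coeff k = ∑ s ∈ F, ((s.choose k : ℕ) : ℚ) := by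
    intro k
    rw [hPcDef, hP, Polynomial.sum_comp, Polynomial.finset_sum_coeff]
    refine Finset.sum_congr rfl fun s _ => ?_
    rw [Polynomial.X_pow_comp, Polynomial.coeff_X_add_one_pow]
  have e0 := congrArg (fun p : Polynomial ℚ => p.coeff 0) main
  have e1 := congrArg (fun p : Polynomial ℚ => p.coeff 1) main
  have e2 := congrArg (fun p : Polynomial ℚ => p.coeff 2) main
  have e3 := congrArg (fun p : Polynomial ℚ => p.coeff 3) main
  simp only [Polynomial.coeff_sub, coeffX1, coeffX2, coeffX3,
    Polynomial.mul_coeff_zero, Polynomial.coeff_X_zero, zero_mul,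
    coeffm3, coeffm2, coeffm1, Qp_coeff, hPcco, Nat.reduceAdd, coeff_X_two, coeff_X_three,
    Polynomial.coeff_X_one, Polynomial.coeff_X_zero, one_mul, zero_mul, zero_add, add_zero] at e0 e1 e2 e3
  set p0 := ∑ s ∈ F, ((s.choose 0 : ℕ) : ℚ) with hp0
  set p1 := ∑ s ∈ F, ((s.choose 1 : ℕ) : ℚ) with hp1
  set p2 := ∑ s ∈ F, ((s.choose 2 : ℕ) : ℚ) with hp2
  simp only [Nat.choose_one_right, Nat.cast_choose_two (K := ℚ), cast_ch3, cast_ch4,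
    Nat.cast_mul] at e0 e1 e2 e3
  have hsq : ∑ s ∈ F, (s:ℚ)^2 = 2*p2 + p1 := by
    rw [hp1, hp2, Finset.mul_sum, ← Finset.sum_add_distrib]
    refine Finset.sum_congr rfl fun s _ => ?_
    rw [Nat.cast_choose_two (K := ℚ), Nat.choose_one_right]
    ring
  rw [← Int.cast_inj (α := ℚ)]
  push_cast
  rw [hsq]
  have hd1 : (0:ℚ) < (d1:ℚ) := by exact_mod_cast Nat.zero_lt_of_lt h1
  have hd2 : (0:ℚ) < (d2:ℚ) := by exact_mod_cast Nat.zero_lt_of_lt (h1.trans h12)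
  have hd3 : (0:ℚ) < (d3:ℚ) := by exact_mod_cast Nat.zero_lt_of_lt ((h1.trans h12).trans h23)
  have hne : ((d1:ℚ)*(d2:ℚ)*(d3:ℚ)) ≠ 0 := by positivity
  have h3 : ((d1:ℚ)*(d2:ℚ)*(d3:ℚ))^3 ≠ 0 := pow_ne_zero _ hne
  apply mul_right_cancel₀ h3
  linear_combination (norm := ring1) (24*((d1:ℚ)*(d2:ℚ)*(d3:ℚ))^2)*e3 + (12*((d1:ℚ)*(d2:ℚ)*(d3:ℚ))^2 - 24*(((d1:ℚ)*((d1:ℚ)-1)/2)*(d2:ℚ)*(d3:ℚ)+((d2:ℚ)*((d2:ℚ)-1)/2)*(d3:ℚ)*(d1:ℚ)+((d3:ℚ)*((d3:ℚ)-1)/2)*(d1:ℚ)*(d2:ℚ))*((d1:ℚ)*(d2:ℚ)*(d3:ℚ)))*e2 + (24*(((d1:ℚ)*((d1:ℚ)-1)/2)*(d2:ℚ)*(d3:ℚ)+((d2:ℚ)*((d2:ℚ)-1)/2)*(d3:ℚ)*(d1:ℚ)+((d3:ℚ)*((d3:ℚ)-1)/2)*(d1:ℚ)*(d2:ℚ))^2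 - 24*(((d1:ℚ)*((d1:ℚ)-1)*((d1:ℚ)-2)/6)*(d2:ℚ)*(d3:ℚ)+((d2:ℚ)*((d2:ℚ)-1)*((d2:ℚ)-2)/6)*(d3:ℚ)*(d1:ℚ)+((d3:ℚ)*((d3:ℚ)-1)*((d3:ℚ)-2)/6)*(d1:ℚ)*(d2:ℚ)+((d1:ℚ)*((d1:ℚ)-1)/2)*((d2:ℚ)*((d2:ℚ)-1)/2)*(d3:ℚ)+((d1:ℚ)*((d1:ℚ)-1)/2)*((d3:ℚ)*((d3:ℚ)-1)/2)*(d2:ℚ)+((d2:ℚ)*((d2:ℚ)-1)/2)*((d3:ℚ)*((d3:ℚ)-1)/2)*(d1:ℚ))*((d1:ℚ)*(d2:ℚ)*(d3:ℚ)) - 12*(((d1:ℚ)*((d1:ℚ)-1)/2)*(d2:ℚ)*(d3:ℚ)+((d2:ℚ)*((d2:ℚ)-1)/2)*(d3:ℚ)*(d1:ℚ)+((d3:ℚ)*((d3:ℚ)-1)/2)*(d1:ℚ)*(d2:ℚ))*((d1:ℚ)*(d2:ℚ)*(d3:ℚ)))*e1 - ((-6)*(d1:ℚ)^2*(d2:ℚ)^2*(d3:ℚ)^2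 + (1)*(d1:ℚ)^2*(d2:ℚ)^2*(d3:ℚ)^2*((a33:ℚ)*(d3:ℚ))^3 + (2)*(d1:ℚ)^2*(d2:ℚ)^2*(d3:ℚ)^2*((a22:ℚ)*(d2:ℚ))^1*((a33:ℚ)*(d3:ℚ))^2 + (2)*(d1:ℚ)^2*(d2:ℚ)^2*(d3:ℚ)^2*((a22:ℚ)*(d2:ℚ))^2*((a33:ℚ)*(d3:ℚ))^1 + (1)*(d1:ℚ)^2*(d2:ℚ)^2*(d3:ℚ)^2*((a22:ℚ)*(d2:ℚ))^3 + (7)*(d1:ℚ)^2*(d2:ℚ)^2*(d3:ℚ)^3 + (-2)*(d1:ℚ)^2*(d2:ℚ)^2*(d3:ℚ)^3*((a33:ℚ)*(d3:ℚ))^2 + (-3)*(d1:ℚ)^2*(d2:ℚ)^2*(d3:ℚ)^3*((a22:ℚ)*(d2:ℚ))^1*((a33:ℚ)*(d3:ℚ))^1 + (-2)*(d1:ℚ)^2*(d2:ℚ)^2*(d3:ℚ)^3*((a22:ℚ)*(d2:ℚ))^2 + (-2)*(d1:ℚ)^2*(d2:ℚ)^2*(d3:ℚ)^4 + (1)*(d1:ℚ)^2*(d2:ℚ)^2*(d3:ℚ)^4*((a33:ℚ)*(d3:ℚ))^1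 + (1)*(d1:ℚ)^2*(d2:ℚ)^2*(d3:ℚ)^4*((a22:ℚ)*(d2:ℚ))^1 + (7)*(d1:ℚ)^2*(d2:ℚ)^3*(d3:ℚ)^2 + (-2)*(d1:ℚ)^2*(d2:ℚ)^3*(d3:ℚ)^2*((a33:ℚ)*(d3:ℚ))^2 + (-3)*(d1:ℚ)^2*(d2:ℚ)^3*(d3:ℚ)^2*((a22:ℚ)*(d2:ℚ))^1*((a33:ℚ)*(d3:ℚ))^1 + (-2)*(d1:ℚ)^2*(d2:ℚ)^3*(d3:ℚ)^2*((a22:ℚ)*(d2:ℚ))^2 + (-6)*(d1:ℚ)^2*(d2:ℚ)^3*(d3:ℚ)^3 + (3)*(d1:ℚ)^2*(d2:ℚ)^3*(d3:ℚ)^3*((a33:ℚ)*(d3:ℚ))^1 + (3)*(d1:ℚ)^2*(d2:ℚ)^3*(d3:ℚ)^3*((a22:ℚ)*(d2:ℚ))^1 + (-2)*(d1:ℚ)^2*(d2:ℚ)^4*(d3:ℚ)^2 + (1)*(d1:ℚ)^2*(d2:ℚ)^4*(d3:ℚ)^2*((a33:ℚ)*(d3:ℚ))^1 + (1)*(d1:ℚ)^2*(d2:ℚ)^4*(d3:ℚ)^2*((a22:ℚ)*(d2:ℚ))^1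 + (7)*(d1:ℚ)^3*(d2:ℚ)^2*(d3:ℚ)^2 + (-2)*(d1:ℚ)^3*(d2:ℚ)^2*(d3:ℚ)^2*((a33:ℚ)*(d3:ℚ))^2 + (-3)*(d1:ℚ)^3*(d2:ℚ)^2*(d3:ℚ)^2*((a22:ℚ)*(d2:ℚ))^1*((a33:ℚ)*(d3:ℚ))^1 + (-2)*(d1:ℚ)^3*(d2:ℚ)^2*(d3:ℚ)^2*((a22:ℚ)*(d2:ℚ))^2 + (-6)*(d1:ℚ)^3*(d2:ℚ)^2*(d3:ℚ)^3 + (3)*(d1:ℚ)^3*(d2:ℚ)^2*(d3:ℚ)^3*((a33:ℚ)*(d3:ℚ))^1 + (3)*(d1:ℚ)^3*(d2:ℚ)^2*(d3:ℚ)^3*((a22:ℚ)*(d2:ℚ))^1 + (-6)*(d1:ℚ)^3*(d2:ℚ)^3*(d3:ℚ)^2 + (3)*(d1:ℚ)^3*(d2:ℚ)^3*(d3:ℚ)^2*((a33:ℚ)*(d3:ℚ))^1 + (3)*(d1:ℚ)^3*(d2:ℚ)^3*(d3:ℚ)^2*((a22:ℚ)*(d2:ℚ))^1 + (-1)*(d1:ℚ)^3*(d2:ℚ)^3*(d3:ℚ)^3*((a33:ℚ)*(d3:ℚ))^1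 + (-1)*(d1:ℚ)^3*(d2:ℚ)^3*(d3:ℚ)^3*((a22:ℚ)*(d2:ℚ))^1 + (1)*(d1:ℚ)^3*(d2:ℚ)^3*(d3:ℚ)^4 + (1)*(d1:ℚ)^3*(d2:ℚ)^4*(d3:ℚ)^3 + (-2)*(d1:ℚ)^4*(d2:ℚ)^2*(d3:ℚ)^2 + (1)*(d1:ℚ)^4*(d2:ℚ)^2*(d3:ℚ)^2*((a33:ℚ)*(d3:ℚ))^1 + (1)*(d1:ℚ)^4*(d2:ℚ)^2*(d3:ℚ)^2*((a22:ℚ)*(d2:ℚ))^1 + (1)*(d1:ℚ)^4*(d2:ℚ)^3*(d3:ℚ)^3)*e0
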